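/- Let f(n,h,k) be the number of nonisomorphic n-element semiorders of length h with exactly k elements on the last ((h+1)-th) level. Then for h ≥ 1, f(n,h,k) = Σ_{m=1}^{n-k} C(m+k−1, m−1) · f(n−k, h−1, m). -/

import Mathlib

namespace Paper

/-- Two elements are incomparable. -/
def Incomp {α : Type*} [PartialOrder α] (a b : α) : Prop := ¬ a ≤ b ∧ ¬ b ≤ a

/-- A semiorder: no induced `2+2` and no induced `3+1`. -/
def IsSemiorder (α : Type*) [PartialOrder α] : Prop :=
  (¬ ∃ x y z w : α, y < x ∧ w < z ∧ Incomp x z ∧ Incomp x w ∧ Incomp y z ∧ Incomp y w) ∧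
  (¬ ∃ x y z w : α, z < y ∧ y < x ∧ Incomp x w ∧ Incomp y w ∧ Incomp z w)

/-- There is a chain of `k` elements. -/
def HasChain (α : Type*) [Preorder α] (k : ℕ) : Prop := ∃ c : Fin k → α, StrictMono c

/-- The length of a longest chain (number of edges) is exactly `H`. -/
def HasLength (α : Type*) [Preorder α] (H : ℕ) : Prop :=
  HasChain α (H + 1) ∧ ¬ HasChain α (H + 2)

/-- There is a chain of `k` elements all strictly above `a`. -/
def HasChainAbove {α : Type*} [Preorder α] (a : α) (k : ℕ) : Prop :=
  ∃ c : Fin k → α, StrictMono c ∧ ∀ j, a < c j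

/-- `a` is on the `i`-th level (`i ≥ 1`). -/
def OnLevel {α : Type*} [Preorder α] (a : α) (i : ℕ) : Prop :=
  1 ≤ i ∧ HasChainAbove a (i - 1) ∧ ¬ HasChainAbove a i

/-- Number of isomorphism classes of partial orders on `Fin n` satisfying `pred`. -/
noncomputable def countPosets (n : ℕ) (pred : PartialOrder (Fin n) → Prop) : ℕ :=
  Nat.card (Quot (fun (P Q : {P : PartialOrder (Fin n) // pred P}) =>
    ∃ e : Fin n ≃ Fin n, ∀ a b : Fin n,
      (@LE.le _ P.1.toPreorder.toLE a b ↔ @LE.le _ Q.1.toPreorder.toLE (e a) (e b))))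

/-- Semiorder of length exactly `H`. -/
def SemiLen (n H : ℕ) (P : PartialOrder (Fin n)) : Prop :=
  @IsSemiorder (Fin n) P ∧ @HasLength (Fin n) P.toPreorder H

/-- Semiorder of length at most `h`. -/
def SemiLenLe (n h : ℕ) (P : PartialOrder (Fin n)) : Prop :=
  @IsSemiorder (Fin n) P ∧ ¬ @HasChain (Fin n) P.toPreorder (h + 2)

/-- `f_H^n`. -/
noncomputable def fEx (H n : ℕ) : ℕ := countPosets n (SemiLen n H)

/-- `f_{≤h}^n`. -/
noncomputable def fLe (h n : ℕ) : ℕ := countPosets n (SemiLenLe n h)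

/-- Ordered (plane) trees. -/
inductive PTree where
  | node : List PTree → PTree

def PTree.size : PTree → ℕ
  | .node cs => 1 + (cs.attach.map fun c => PTree.size c.1).sum
decreasing_by have := List.sizeOf_lt_of_mem c.2; simp only [PTree.node.sizeOf_spec] at *; omega

def PTree.height : PTree → ℕ
  | .node cs => (cs.attach.map fun c => PTree.height c.1 + 1).foldr max 0
decreasing_by have := List.sizeOf_lt_of_mem c.2; simp only [PTree.node.sizeOf_spec] at *; omega

def PTree.countDepth : PTree → ℕ → ℕ
  | .node _, 0 => 1
  | .node cs, d + 1 => (cs.attach.map fun c => PTree.countDepth c.1 d).sum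
termination_by t _ => sizeOf t
decreasing_by have := List.sizeOf_lt_of_mem c.2; simp only [PTree.node.sizeOf_spec] at *; omega

/-- Value of a path after the steps in `l` (`true` = up-step, `false` = down-step). -/
def pathVal (l : List Bool) : ℤ := (l.map fun b => if b then (1 : ℤ) else -1).sum

/-- `l` is a Dyck path. -/
def IsDyckPath (l : List Bool) : Prop :=
  pathVal l = 0 ∧ ∀ p, p <+: l → 0 ≤ pathVal p

/-- The height of the path `l` is exactly `H`. -/
def DyckHeightIs (l : List Bool) (H : ℕ) : Prop :=
  (∃ p, p <+: l ∧ pathVal p = H) ∧ ∀ p, p <+: l → pathVal p ≤ (H : ℤ)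

/-- Number of peaks of a path. -/
def peaks (l : List Bool) : ℕ :=
  ((List.range l.length).filter fun i => l.getD i false && !(l.getD (i + 1) true)).length


/-- The number of elements of the poset `P` on level `i`. -/
noncomputable def levCount (n : ℕ) (P : PartialOrder (Fin n)) (i : ℕ) : ℕ :=
  Nat.card {a : Fin n // @OnLevel (Fin n) P.toPreorder a i}

/-- `f(n,h,k)`: the number of nonisomorphic `n`-element semiorders of length `h`
with exactly `k` elements on the last (`(h+1)`-th) level. -/
noncomputable def f (n h k : ℕ) : ℕ :=
  countPosets n (fun P => SemiLen n h P ∧ levCount n P (h + 1) = k)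



/-- Canonical semiorder data. -/
def Canon (n : ℕ) : Type :=
  {r : Fin n → ℕ // Monotone r ∧ ∀ i : Fin n, i.1 < r i ∧ r i ≤ n}

noncomputable instance (n : ℕ) : Fintype (Canon n) := by
  classical
  exact Fintype.ofInjective
    (fun c : Canon n => fun i : Fin n => (⟨c.1 i, Nat.lt_succ_of_le (c.2.2 i).2⟩ : Fin (n+1)))
    (by intro c c' h; apply Subtype.ext; funext i
        have := congrFun h i; exact congrArg Fin.val this)

/-- Extension of `r` to all of `ℕ`. -/
def extR (n : ℕ) (r : Fin n → ℕ) : ℕ → ℕ := fun i =>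
  if h : i < n then max (r ⟨i, h⟩) (i + 1) else i + 1

lemma lt_extR (n : ℕ) (r : Fin n → ℕ) (i : ℕ) : i < extR n r i := by
  unfold extR; split <;> omega

def upcAux (n : ℕ) (R : ℕ → ℕ) (hR : ∀ i, i < R i) (i : ℕ) : ℕ :=
  if R i < n then upcAux n R hR (R i) + 1 else 0
termination_by n - i
decreasing_by have := hR i; omega

noncomputable def Canon.upc {n : ℕ} (c : Canon n) : ℕ → ℕ :=
  upcAux n (extR n c.1) (lt_extR n c.1)

lemma Canon.upc_eq {n : ℕ} (c : Canon n) (i : ℕ) :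
    c.upc i = if extR n c.1 i < n then c.upc (extR n c.1 i) + 1 else 0 := by
  unfold Canon.upc; rw [upcAux]

lemma extR_of_lt {n : ℕ} (c : Canon n) {i : ℕ} (h : i < n) :
    extR n c.1 i = c.1 ⟨i, h⟩ := by
  have h2 := (c.2.2 ⟨i, h⟩).1
  have h3 : i < c.1 ⟨i, h⟩ := h2
  unfold extR; rw [dif_pos h]; exact Nat.max_eq_left h3

lemma Canon.upc_eq' {n : ℕ} (c : Canon n) {i : ℕ} (h : i < n) :
    c.upc i = if c.1 ⟨i, h⟩ < n then c.upc (c.1 ⟨i, h⟩) + 1 else 0 := by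
  rw [c.upc_eq, extR_of_lt c h]

lemma Canon.upc_of_ge {n : ℕ} (c : Canon n) {i : ℕ} (h : n ≤ i) : c.upc i = 0 := by
  rw [c.upc_eq]
  have : ¬ extR n c.1 i < n := by unfold extR; rw [dif_neg (by omega)]; omega
  simp [this]

lemma Canon.upc_anti {n : ℕ} (c : Canon n) : ∀ ⦃i j : ℕ⦄, i ≤ j → c.upc j ≤ c.upc i := by
  intro i j hij
  rcases Nat.lt_or_ge j n with hj | hj
  · have hi : i < n := lt_of_le_of_lt hij hj
    rw [c.upc_eq' hi, c.upc_eq' hj]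
    have hrr : c.1 ⟨i, hi⟩ ≤ c.1 ⟨j, hj⟩ := c.2.1 (by exact hij)
    by_cases h2 : c.1 ⟨j, hj⟩ < n
    · rw [if_pos h2, if_pos (lt_of_le_of_lt hrr h2)]
      have : c.upc (c.1 ⟨j, hj⟩) ≤ c.upc (c.1 ⟨i, hi⟩) := c.upc_anti hrr
      omega
    · rw [if_neg h2]; omega
  · rw [c.upc_of_ge hj]; omega
termination_by i _ _ => n - i
decreasing_by have h9 : i < c.1 ⟨i, hi⟩ := (c.2.2 ⟨i, hi⟩).1; omega


/-- The canonical model partial order. -/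
def model {n : ℕ} (c : Canon n) : PartialOrder (Fin n) where
  le a b := a = b ∨ c.1 a ≤ b.1
  lt a b := (a = b ∨ c.1 a ≤ b.1) ∧ ¬(b = a ∨ c.1 b ≤ a.1)
  lt_iff_le_not_ge _ _ := Iff.rfl
  le_refl a := Or.inl rfl
  le_trans a b d hab hbd := by
    rcases hab with rfl | hab
    · exact hbd
    · rcases hbd with rfl | hbd
      · exact Or.inr hab
      · right
        have h1 := (c.2.2 b).1
        exact le_trans hab (le_trans (Nat.le_of_lt h1) hbd)
  le_antisymm a b hab hba := by
    rcases hab with rfl | hab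
    · rfl
    · rcases hba with rfl | hba
      · rfl
      · have h1 := (c.2.2 a).1
        have h2 := (c.2.2 b).1
        omega

lemma model_le_iff {n : ℕ} (c : Canon n) (a b : Fin n) :
    (@LE.le _ (model c).toLE a b) ↔ (a = b ∨ c.1 a ≤ b.1) := Iff.rfl

lemma model_lt_iff {n : ℕ} (c : Canon n) (a b : Fin n) :
    (@LT.lt _ (model c).toLT a b) ↔ c.1 a ≤ b.1 := by
  rw [@lt_iff_le_not_ge _ (model c).toPreorder]
  constructor
  · rintro ⟨hab | hab, hn⟩
    · exact absurd (Or.inl hab.symm) hn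
    · exact hab
  · intro h
    have h1 := (c.2.2 a).1
    have h2 := (c.2.2 b).1
    refine ⟨Or.inr h, ?_⟩
    rintro (rfl | hba)
    · omega
    · omega



section ChainLemmas

variable {α : Type*} [Preorder α]

lemma hasChainAbove_zero (x : α) : HasChainAbove x 0 :=
  ⟨fun j => j.elim0, fun j => j.elim0, fun j => j.elim0⟩

lemma strictMono_cons {t : ℕ} {x : α} {c : Fin t → α} (hc : StrictMono c)
    (hx : ∀ j, x < c j) : StrictMono (Fin.cons x c) := by
  intro a b hab
  refine Fin.cases (fun b hab => ?_) (fun a' b hab => ?_) a b hab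
  · refine Fin.cases (fun hab => ?_) (fun b' _ => ?_) b hab
    · exact absurd hab (lt_irrefl _)
    · simp only [Fin.cons_zero, Fin.cons_succ]; exact hx b'
  · refine Fin.cases (fun hab => ?_) (fun b' hab => ?_) b hab
    · exact absurd (Fin.lt_def.mp hab) (by simp)
    · simp only [Fin.cons_succ]
      exact hc (Fin.succ_lt_succ_iff.mp hab)

lemma hasChainAbove_succ_iff (x : α) (t : ℕ) :
    HasChainAbove x (t + 1) ↔ ∃ y, x < y ∧ HasChainAbove y t := by
  constructor
  · rintro ⟨c, hc, hx⟩
    exact ⟨c 0, hx 0, c ∘ Fin.succ, fun a b h => hc (Fin.succ_lt_succ_iff.mpr h),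
      fun j => hc (Fin.succ_pos j)⟩
  · rintro ⟨y, hxy, c, hc, hy⟩
    refine ⟨Fin.cons y c, strictMono_cons hc hy, ?_⟩
    intro j
    refine Fin.cases ?_ (fun j' => ?_) j
    · simpa using hxy
    · simp only [Fin.cons_succ]
      exact lt_trans hxy (hy j')

lemma hasChain_succ_iff (t : ℕ) :
    HasChain α (t + 1) ↔ ∃ x : α, HasChainAbove x t := by
  constructor
  · rintro ⟨c, hc⟩
    exact ⟨c 0, c ∘ Fin.succ, fun a b h => hc (Fin.succ_lt_succ_iff.mpr h),
      fun j => hc (Fin.succ_pos j)⟩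
  · rintro ⟨x, c, hc, hx⟩
    exact ⟨Fin.cons x c, strictMono_cons hc hx⟩

end ChainLemmas


section ModelLemmas

variable {n : ℕ} (c : Canon n)

lemma Canon.upc_fin (x : Fin n) :
    c.upc x.1 = if c.1 x < n then c.upc (c.1 x) + 1 else 0 := by
  rw [c.upc_eq' x.2, Fin.eta]

lemma model_chainAbove (x : Fin n) (t : ℕ) :
    @HasChainAbove _ (model c).toPreorder x t ↔ t ≤ c.upc x.1 := by
  induction t generalizing x with
  | zero => simpa using @hasChainAbove_zero _ (model c).toPreorder x
  | succ t ih =>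
    rw [@hasChainAbove_succ_iff _ (model c).toPreorder x t]
    constructor
    · rintro ⟨y, hxy, hy⟩
      rw [model_lt_iff] at hxy
      have h1 := (ih y).mp hy
      have h2 : c.upc y.1 ≤ c.upc (c.1 x) := c.upc_anti hxy
      rw [c.upc_fin x, if_pos (lt_of_le_of_lt hxy y.2)]
      omega
    · intro h
      rw [c.upc_fin x] at h
      by_cases h2 : c.1 x < n
      · rw [if_pos h2] at h
        refine ⟨⟨c.1 x, h2⟩, ?_, (ih _).mpr (by simpa using Nat.le_of_succ_le_succ h)⟩
        rw [model_lt_iff]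
      · rw [if_neg h2] at h; omega

lemma model_hasChain (t : ℕ) :
    @HasChain _ (model c).toPreorder (t + 1) ↔ 0 < n ∧ t ≤ c.upc 0 := by
  rw [@hasChain_succ_iff _ (model c).toPreorder t]
  constructor
  · rintro ⟨x, hx⟩
    have h1 := (model_chainAbove c x t).mp hx
    exact ⟨x.pos, le_trans h1 (c.upc_anti (Nat.zero_le _))⟩
  · rintro ⟨hn, h⟩
    exact ⟨⟨0, hn⟩, (model_chainAbove c _ t).mpr h⟩

lemma model_onLevel (x : Fin n) (L : ℕ) :
    @OnLevel _ (model c).toPreorder x L ↔ L = c.upc x.1 + 1 := by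
  unfold OnLevel
  rw [model_chainAbove, model_chainAbove]
  omega

lemma model_semiorder : @IsSemiorder _ (model c) := by
  constructor
  · rintro ⟨x, y, z, w, hyx, hwz, hxz, hxw, hyz, hyw⟩
    rw [model_lt_iff] at hyx hwz
    rcases le_total y w with hle | hle
    · exact hyz.1 (Or.inr (le_trans (c.2.1 hle) hwz))
    · exact hxw.2 (Or.inr (le_trans (c.2.1 hle) hyx))
  · rintro ⟨x, y, z, w, hzy, hyx, hxw, hyw, hzw⟩
    rw [model_lt_iff] at hzy hyx
    have h1 : ¬ (z = w ∨ c.1 z ≤ w.1) := hzw.1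
    push_neg at h1
    have h2 : w ≤ y := by
      have := h1.2
      exact le_of_lt (lt_of_lt_of_le (Fin.lt_def.mpr (lt_of_lt_of_le (Nat.lt_of_lt_of_le this hzy) (le_refl _))) (le_refl _))
    exact hxw.2 (Or.inr (le_trans (c.2.1 h2) hyx))

lemma model_levCount (L : ℕ) :
    levCount n (model c) (L + 1) = Nat.card {a : Fin n // c.upc a.1 = L} := by
  unfold levCount
  refine Nat.card_congr (Equiv.subtypeEquivRight fun a => ?_)
  rw [model_onLevel]
  omega

lemma model_semiLen (h : ℕ) :
    SemiLen n h (model c) ↔ (0 < n ∧ c.upc 0 = h) := by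
  unfold SemiLen HasLength
  have h1 := model_hasChain c h
  have h2 := model_hasChain c (h + 1)
  constructor
  · rintro ⟨_, hc1, hc2⟩
    have := h1.mp hc1
    refine ⟨this.1, ?_⟩
    by_contra hne
    exact hc2 (h2.mpr ⟨this.1, by omega⟩)
  · rintro ⟨hn, hup⟩
    exact ⟨model_semiorder c, h1.mpr ⟨hn, by omega⟩, fun hc2 => by
      have := h2.mp hc2; omega⟩

end ModelLemmas


section FinsetLemmas

open Finset

lemma card_filter_ge (n t : ℕ) :
    ((univ : Finset (Fin n)).filter fun b => t ≤ b.1).card = n - t := by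
  classical
  rcases Nat.lt_or_ge t n with h | h
  · have : ((univ : Finset (Fin n)).filter fun b => t ≤ b.1) = Ici ⟨t, h⟩ := by
      ext b; simp [Fin.le_def]
    rw [this, Fin.card_Ici]
  · have : ((univ : Finset (Fin n)).filter fun b => t ≤ b.1) = ∅ := by
      ext b; simp only [mem_filter, mem_univ, true_and, notMem_empty, iff_false]
      have := b.2; omega
    rw [this, Finset.card_empty]; omega

lemma card_filter_lt' (n t : ℕ) :
    ((univ : Finset (Fin n)).filter fun b => b.1 < t).card = min t n := by
  classical
  have h1 : ((univ : Finset (Fin n)).filter fun b => b.1 < t) =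
      (univ \ (univ.filter fun b : Fin n => t ≤ b.1)) := by
    ext b; simp only [mem_filter, mem_univ, true_and, mem_sdiff]; omega
  rw [h1, card_sdiff_of_subset (filter_subset _ _), card_filter_ge, card_univ, Fintype.card_fin]
  omega

lemma mem_upClosed_iff {n : ℕ} (T : Finset (Fin n))
    (hT : ∀ ⦃j j' : Fin n⦄, j ∈ T → j ≤ j' → j' ∈ T) (j : Fin n) :
    j ∈ T ↔ n - T.card ≤ j.1 := by
  classical
  constructor
  · intro hj
    have hsub : ((univ : Finset (Fin n)).filter fun b => j.1 ≤ b.1) ⊆ T := by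
      intro l hl
      simp only [mem_filter, mem_univ, true_and] at hl
      exact hT hj (Fin.le_def.mpr hl)
    have := Finset.card_le_card hsub
    rw [card_filter_ge] at this
    have := j.2; omega
  · intro hj
    by_contra hnj
    have hsub : T ⊆ (univ : Finset (Fin n)).filter fun b => j.1 + 1 ≤ b.1 := by
      intro l hl
      simp only [mem_filter, mem_univ, true_and]
      rcases Nat.lt_or_ge j.1 l.1 with h | h
      · omega
      · exact absurd (hT hl (Fin.le_def.mpr h)) hnj
    have := Finset.card_le_card hsub
    rw [card_filter_ge] at this
    have := j.2; omega

lemma mem_downClosed_iff {n : ℕ} (T : Finset (Fin n))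
    (hT : ∀ ⦃j j' : Fin n⦄, j ∈ T → j' ≤ j → j' ∈ T) (j : Fin n) :
    j ∈ T ↔ j.1 < T.card := by
  classical
  constructor
  · intro hj
    have hsub : ((univ : Finset (Fin n)).filter fun b => b.1 < j.1 + 1) ⊆ T := by
      intro l hl
      simp only [mem_filter, mem_univ, true_and] at hl
      exact hT hj (Fin.le_def.mpr (by omega))
    have := Finset.card_le_card hsub
    rw [card_filter_lt'] at this
    have := j.2; omega
  · intro hj
    by_contra hnj
    have hsub : T ⊆ (univ : Finset (Fin n)).filter fun b => b.1 < j.1 := by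
      intro l hl
      simp only [mem_filter, mem_univ, true_and]
      rcases Nat.lt_or_ge l.1 j.1 with h | h
      · exact h
      · exact absurd (hT hl (Fin.le_def.mpr h)) hnj
    have := Finset.card_le_card hsub
    rw [card_filter_lt'] at this
    omega

end FinsetLemmas


section Structure

open Finset
open scoped Classical

variable {α : Type*} [PartialOrder α]

/-- The strict up-set. -/
noncomputable def Uset [Fintype α] (a : α) : Finset α := univ.filter fun b => a < b
/-- The strict down-set. -/
noncomputable def Dset [Fintype α] (a : α) : Finset α := univ.filter fun b => b < a

variable [Fintype α]

@[simp] lemma mem_Uset {a b : α} : b ∈ Uset a ↔ a < b := by simp [Uset]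
@[simp] lemma mem_Dset {a b : α} : b ∈ Dset a ↔ b < a := by simp [Dset]

lemma dset_total (hP : IsSemiorder α) (a b : α) : Dset a ⊆ Dset b ∨ Dset b ⊆ Dset a := by
  by_contra hcon
  push_neg at hcon
  obtain ⟨x, hxa, hxb⟩ := Finset.not_subset.mp hcon.1
  obtain ⟨y, hyb, hya⟩ := Finset.not_subset.mp hcon.2
  rw [mem_Dset] at hxa hyb
  rw [mem_Dset] at hxb hya
  refine hP.1 ⟨a, x, b, y, hxa, hyb, ⟨?_, ?_⟩, ⟨?_, ?_⟩, ⟨?_, ?_⟩, ⟨?_, ?_⟩⟩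
  · intro h; exact hxb (lt_of_lt_of_le hxa h)
  · intro h; exact hya (lt_of_lt_of_le hyb h)
  · intro h; exact hxb (lt_of_lt_of_le hxa (le_trans h (le_of_lt hyb)))
  · intro h
    rcases lt_or_eq_of_le h with h' | h'
    · exact hya h'
    · exact hxb (lt_trans hxa (show a < b by rw [← h']; exact hyb))
  · intro h
    rcases lt_or_eq_of_le h with h' | h'
    · exact hxb h'
    · exact hya (lt_trans hyb (show b < a by rw [← h']; exact hxa))
  · intro h; exact hya (lt_of_lt_of_le hyb (le_trans h (le_of_lt hxa)))
  · intro h; exact hxb (lt_of_le_of_lt h hyb)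
  · intro h; exact hya (lt_of_le_of_lt h hxa)

lemma uset_total (hP : IsSemiorder α) (a b : α) : Uset a ⊆ Uset b ∨ Uset b ⊆ Uset a := by
  by_contra hcon
  push_neg at hcon
  obtain ⟨x, hax, hbx⟩ := Finset.not_subset.mp hcon.1
  obtain ⟨y, hby, hay⟩ := Finset.not_subset.mp hcon.2
  rw [mem_Uset] at hax hby
  rw [mem_Uset] at hbx hay
  refine hP.1 ⟨x, a, y, b, hax, hby, ⟨?_, ?_⟩, ⟨?_, ?_⟩, ⟨?_, ?_⟩, ⟨?_, ?_⟩⟩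
  · intro h; exact hay (lt_of_lt_of_le hax h)
  · intro h; exact hbx (lt_of_lt_of_le hby h)
  · intro h; exact hay (lt_trans (lt_of_lt_of_le hax h) hby)
  · intro h
    rcases lt_or_eq_of_le h with h' | h'
    · exact hbx h'
    · exact hay (lt_trans (show a < b by rw [h']; exact hax) hby)
  · intro h
    rcases lt_or_eq_of_le h with h' | h'
    · exact hay h'
    · exact hbx (lt_trans (show b < a by rw [h']; exact hby) hax)
  · intro h; exact hbx (lt_trans (lt_of_lt_of_le hby h) hax)
  · intro h; exact hay (lt_of_le_of_lt h hby)
  · intro h; exact hbx (lt_of_le_of_lt h hax)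

lemma uset_ssubset_dset (hP : IsSemiorder α) {a b : α}
    (hU : Uset b ⊆ Uset a) (hne : Uset a ≠ Uset b) : Dset a ⊆ Dset b := by
  obtain ⟨cc, hcc1, hcc2⟩ := Finset.exists_of_ssubset (lt_of_le_of_ne hU hne.symm)
  rw [mem_Uset] at hcc1
  rw [mem_Uset] at hcc2
  intro z hz
  rw [mem_Dset] at hz ⊢
  by_contra hzb
  refine hP.2 ⟨cc, a, z, b, hz, hcc1, ⟨?_, ?_⟩, ⟨?_, ?_⟩, ⟨?_, ?_⟩⟩
  · intro h; exact hzb (lt_trans hz (lt_of_lt_of_le hcc1 h))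
  · intro h
    rcases lt_or_eq_of_le h with h' | h'
    · exact hcc2 h'
    · exact hzb (lt_trans hz (show a < b by rw [h']; exact hcc1))
  · intro h
    rcases lt_or_eq_of_le h with h' | h'
    · exact hzb (lt_trans hz h')
    · exact hzb (show z < b by rw [← h']; exact hz)
  · intro h
    rcases lt_or_eq_of_le h with h' | h'
    · exact hcc2 (lt_trans h' hcc1)
    · exact hzb (show z < b by rw [← h'] at hz; exact hz)
  · intro h
    rcases lt_or_eq_of_le h with h' | h'
    · exact hzb h'
    · exact hcc2 (lt_trans (show b < a by rw [← h']; exact hz) hcc1)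
  · intro h; exact hcc2 (lt_trans (lt_of_le_of_lt h hz) hcc1)

variable (α) in
/-- The weight used for sorting. -/
noncomputable def wgt (a : α) : ℕ :=
  (Fintype.card α - (Uset a).card) * (Fintype.card α + 1) + (Dset a).card

lemma wgt_le (hP : IsSemiorder α) {a b : α} (h : wgt α a ≤ wgt α b) :
    Uset b ⊆ Uset a ∧ Dset a ⊆ Dset b := by
  set N := Fintype.card α with hN
  have hUa : (Uset a).card ≤ N := Finset.card_le_univ _
  have hUb : (Uset b).card ≤ N := Finset.card_le_univ _
  have hDa : (Dset a).card ≤ N := Finset.card_le_univ _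
  have hDb : (Dset b).card ≤ N := Finset.card_le_univ _
  have hcardU : (Uset b).card ≤ (Uset a).card := by
    by_contra hlt
    push_neg at hlt
    have h1 : N - (Uset b).card + 1 ≤ N - (Uset a).card := by omega
    have h2 : (N - (Uset b).card + 1) * (N + 1) ≤ (N - (Uset a).card) * (N + 1) :=
      Nat.mul_le_mul_right _ h1
    unfold wgt at h
    rw [← hN] at h
    nlinarith
  have hUsub : Uset b ⊆ Uset a := by
    rcases uset_total hP a b with h' | h'
    · have : Uset a = Uset b := Finset.eq_of_subset_of_card_le h' hcardU
      rw [this]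
    · exact h'
  refine ⟨hUsub, ?_⟩
  by_cases heq : Uset a = Uset b
  · have hDle : (Dset a).card ≤ (Dset b).card := by
      unfold wgt at h
      rw [← hN, heq] at h
      omega
    rcases dset_total hP a b with h' | h'
    · exact h'
    · rw [Finset.eq_of_subset_of_card_le h' hDle]
  · exact uset_ssubset_dset hP hUsub heq

lemma wgt_lt (hP : IsSemiorder α) {a b : α} (h : a < b) : wgt α a < wgt α b := by
  set N := Fintype.card α with hN
  have hUsub : Uset b ⊆ Uset a := by
    intro u hu; rw [mem_Uset] at hu ⊢; exact lt_trans h hu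
  have hb : b ∈ Uset a := mem_Uset.mpr h
  have hb' : b ∉ Uset b := by rw [mem_Uset]; exact lt_irrefl b
  have hcard : (Uset b).card < (Uset a).card :=
    Finset.card_lt_card (Finset.ssubset_iff_of_subset hUsub |>.mpr ⟨b, hb, hb'⟩)
  have hUa : (Uset a).card ≤ N := Finset.card_le_univ _
  have hDa : (Dset a).card ≤ N := Finset.card_le_univ _
  have h1 : N - (Uset a).card + 1 ≤ N - (Uset b).card := by omega
  have h2 : (N - (Uset a).card + 1) * (N + 1) ≤ (N - (Uset b).card) * (N + 1) :=
    Nat.mul_le_mul_right _ h1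
  unfold wgt
  rw [← hN]
  nlinarith

theorem exists_canon {n : ℕ} (hn : Fintype.card α = n) (hP : IsSemiorder α) :
    ∃ (c : Canon n) (e : α ≃ Fin n), ∀ a b : α,
      (a ≤ b ↔ (@LE.le _ (model c).toLE (e a) (e b))) := by
  have d : α ≃ Fin n := Fintype.equivFinOfCardEq hn
  set wf : Fin n → ℕ := fun i => wgt α (d.symm i) with hwf
  set σ : Equiv.Perm (Fin n) := Tuple.sort wf with hσ
  set x : Fin n → α := fun i => d.symm (σ i) with hx
  have hmono : Monotone (fun i => wgt α (x i)) := Tuple.monotone_sort wf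
  have hxinj : Function.Injective x := fun i j h => σ.injective (d.symm.injective h)
  have hxsurj : Function.Surjective x := fun a => ⟨σ.symm (d a), by simp [hx]⟩
  set r : Fin n → ℕ := fun i => n - (Uset (x i)).card with hr
  set T : Fin n → Finset (Fin n) := fun i => univ.filter fun j => x i < x j with hT
  have hcardT : ∀ i, (T i).card = (Uset (x i)).card := by
    intro i
    have himg : (T i).image x = Uset (x i) := by
      ext a
      simp only [Finset.mem_image, hT, mem_filter, mem_univ, true_and, mem_Uset]
      constructor
      · rintro ⟨j, hj, rfl⟩; exact hj
      · intro ha; obtain ⟨j, rfl⟩ := hxsurj a; exact ⟨j, ha, rfl⟩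
    rw [← himg, Finset.card_image_of_injective _ hxinj]
  have hmemT : ∀ i j : Fin n, j ∈ T i ↔ r i ≤ j.1 := by
    intro i j
    have hup : ∀ ⦃j j' : Fin n⦄, j ∈ T i → j ≤ j' → j' ∈ T i := by
      intro j j' hj hjj'
      simp only [hT, mem_filter, mem_univ, true_and] at hj ⊢
      have hw : wgt α (x j) ≤ wgt α (x j') := hmono hjj'
      have := (wgt_le hP hw).2
      have hxi : x i ∈ Dset (x j) := mem_Dset.mpr hj
      exact mem_Dset.mp (this hxi)
    rw [mem_upClosed_iff (T i) hup j, hcardT]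
  have hmemT' : ∀ i j : Fin n, x i < x j ↔ r i ≤ j.1 := by
    intro i j
    rw [← hmemT]
    simp [hT]
  have hUcard : ∀ i : Fin n, (Uset (x i)).card ≤ n := by
    intro i
    have := Finset.card_le_univ (Uset (x i))
    rwa [hn] at this
  refine ⟨⟨r, ?_, ?_⟩, ?_⟩
  · -- monotone
    intro i j hij
    have hw : wgt α (x i) ≤ wgt α (x j) := hmono hij
    have hsub := (wgt_le hP hw).1
    have := Finset.card_le_card hsub
    simp only [hr]
    omega
  · -- i < r i and r i ≤ n
    intro i
    constructor
    · have : ¬ (x i < x i) := lt_irrefl _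
      rw [hmemT' i i] at this
      omega
    · simp only [hr]; omega
  · -- the isomorphism
    refine ⟨(σ.trans d.symm).symm, ?_⟩
    intro a b
    obtain ⟨i, rfl⟩ := hxsurj a
    obtain ⟨j, rfl⟩ := hxsurj b
    have hei : (σ.trans d.symm).symm (x i) = i := by
      simp only [hx]
      exact (σ.trans d.symm).symm_apply_apply i
    have hej : (σ.trans d.symm).symm (x j) = j := by
      exact (σ.trans d.symm).symm_apply_apply j
    rw [hei, hej]; refine Iff.trans ?_ (model_le_iff _ i j).symm
    rw [le_iff_lt_or_eq]
    constructor
    · rintro (h | h)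
      · exact Or.inr ((hmemT' i j).mp h)
      · exact Or.inl (hxinj h)
    · rintro (h | h)
      · exact Or.inr (congrArg x h)
      · exact Or.inl ((hmemT' i j).mpr h)
    
end Structure


section Uniqueness

open Finset

lemma canon_inj {n : ℕ} (c c' : Canon n) (e : Fin n ≃ Fin n)
    (he : ∀ a b : Fin n, (@LE.le _ (model c).toLE a b ↔ @LE.le _ (model c').toLE (e a) (e b))) :
    c = c' := by
  classical
  have hlt : ∀ a b : Fin n, c.1 a ≤ b.1 ↔ c'.1 (e a) ≤ (e b).1 := by
    intro a b
    rw [← model_lt_iff c, ← model_lt_iff c']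
    rw [@lt_iff_le_not_ge _ (model c).toPreorder, @lt_iff_le_not_ge _ (model c').toPreorder]
    rw [he a b, he b a]
  have hval : ∀ a : Fin n, c.1 a = c'.1 (e a) := by
    intro a
    have h1 : ((univ : Finset (Fin n)).filter fun b => c.1 a ≤ b.1).card = n - c.1 a :=
      card_filter_ge n (c.1 a)
    have h2 : ((univ : Finset (Fin n)).filter fun b => c'.1 (e a) ≤ b.1).card
        = n - c'.1 (e a) := card_filter_ge n (c'.1 (e a))
    have himg : ((univ : Finset (Fin n)).filter fun b => c.1 a ≤ b.1).image e
        = (univ : Finset (Fin n)).filter fun b => c'.1 (e a) ≤ b.1 := by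
      ext b'
      simp only [Finset.mem_image, mem_filter, mem_univ, true_and]
      constructor
      · rintro ⟨b, hb, rfl⟩; exact (hlt a b).mp hb
      · intro hb'
        exact ⟨e.symm b', (hlt a (e.symm b')).mpr (by simpa using hb'), by simp⟩
    have := congrArg Finset.card himg
    rw [Finset.card_image_of_injective _ e.injective, h1, h2] at this
    have hle := (c.2.2 a).2
    have hle' := (c'.2.2 (e a)).2
    omega
  have hcomp : (c'.1 ∘ (e : Equiv.Perm (Fin n))) = c'.1 ∘ (Equiv.refl (Fin n)) := by
    apply Tuple.unique_monotone
    · have : c'.1 ∘ e = c.1 := by funext a; exact (hval a).symm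
      rw [show ((e : Equiv.Perm (Fin n)) : Fin n → Fin n) = (e : Fin n → Fin n) from rfl]
      rw [this]; exact c.2.1
    · simpa using c'.2.1
  apply Subtype.ext
  funext a
  rw [hval a]
  have := congrFun hcomp a
  simpa using this

end Uniqueness


section Transfer

variable {n : ℕ}

lemma pred_transfer {h k : ℕ} (P Q : PartialOrder (Fin n)) (e : Fin n ≃ Fin n)
    (he : ∀ a b : Fin n, (@LE.le _ P.toPreorder.toLE a b ↔ @LE.le _ Q.toPreorder.toLE (e a) (e b)))
    (hp : SemiLen n h P ∧ levCount n P (h + 1) = k) :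
    SemiLen n h Q ∧ levCount n Q (h + 1) = k := by
  have he' : ∀ a b : Fin n,
      (@LE.le _ Q.toPreorder.toLE a b ↔ @LE.le _ P.toPreorder.toLE (e.symm a) (e.symm b)) := by
    intro a b
    have := he (e.symm a) (e.symm b)
    simp only [Equiv.apply_symm_apply] at this
    exact this.symm
  have hlt : ∀ a b : Fin n,
      (@LT.lt _ P.toPreorder.toLT a b ↔ @LT.lt _ Q.toPreorder.toLT (e a) (e b)) := by
    intro a b
    rw [@lt_iff_le_not_ge _ P.toPreorder, @lt_iff_le_not_ge _ Q.toPreorder, he a b, he b a]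
  have hlt' : ∀ a b : Fin n,
      (@LT.lt _ Q.toPreorder.toLT a b ↔ @LT.lt _ P.toPreorder.toLT (e.symm a) (e.symm b)) := by
    intro a b
    rw [@lt_iff_le_not_ge _ P.toPreorder, @lt_iff_le_not_ge _ Q.toPreorder, he' a b, he' b a]
  have hca : ∀ (x : Fin n) (t : ℕ), @HasChainAbove _ P.toPreorder x t →
      @HasChainAbove _ Q.toPreorder (e x) t := by
    rintro x t ⟨cc, hc, hx⟩
    exact ⟨e ∘ cc, fun i j hij => (hlt _ _).mp (hc hij), fun j => (hlt _ _).mp (hx j)⟩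
  have hca' : ∀ (x : Fin n) (t : ℕ), @HasChainAbove _ Q.toPreorder x t →
      @HasChainAbove _ P.toPreorder (e.symm x) t := by
    rintro x t ⟨cc, hc, hx⟩
    exact ⟨e.symm ∘ cc, fun i j hij => (hlt' _ _).mp (hc hij), fun j => (hlt' _ _).mp (hx j)⟩
  have hcaiff : ∀ (x : Fin n) (t : ℕ), @HasChainAbove _ P.toPreorder x t ↔
      @HasChainAbove _ Q.toPreorder (e x) t := by
    intro x t
    refine ⟨hca x t, fun hq => ?_⟩
    have := hca' (e x) t hq
    simpa using this
  have honl : ∀ (x : Fin n) (L : ℕ), @OnLevel _ P.toPreorder x L ↔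
      @OnLevel _ Q.toPreorder (e x) L := by
    intro x L
    unfold OnLevel
    rw [hcaiff x (L - 1), hcaiff x L]
  obtain ⟨⟨hsemi, hlen⟩, hlev⟩ := hp
  refine ⟨⟨?_, ?_⟩, ?_⟩
  · constructor
    · rintro ⟨x, y, z, w, h1, h2, h3, h4, h5, h6⟩
      refine hsemi.1 ⟨e.symm x, e.symm y, e.symm z, e.symm w, (hlt' _ _).mp h1, (hlt' _ _).mp h2,
        ?_, ?_, ?_, ?_⟩
      · exact ⟨fun hc => h3.1 ((he' _ _).mpr hc), fun hc => h3.2 ((he' _ _).mpr hc)⟩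
      · exact ⟨fun hc => h4.1 ((he' _ _).mpr hc), fun hc => h4.2 ((he' _ _).mpr hc)⟩
      · exact ⟨fun hc => h5.1 ((he' _ _).mpr hc), fun hc => h5.2 ((he' _ _).mpr hc)⟩
      · exact ⟨fun hc => h6.1 ((he' _ _).mpr hc), fun hc => h6.2 ((he' _ _).mpr hc)⟩
    · rintro ⟨x, y, z, w, h1, h2, h3, h4, h5⟩
      refine hsemi.2 ⟨e.symm x, e.symm y, e.symm z, e.symm w, (hlt' _ _).mp h1, (hlt' _ _).mp h2,
        ?_, ?_, ?_⟩
      · exact ⟨fun hc => h3.1 ((he' _ _).mpr hc), fun hc => h3.2 ((he' _ _).mpr hc)⟩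
      · exact ⟨fun hc => h4.1 ((he' _ _).mpr hc), fun hc => h4.2 ((he' _ _).mpr hc)⟩
      · exact ⟨fun hc => h5.1 ((he' _ _).mpr hc), fun hc => h5.2 ((he' _ _).mpr hc)⟩
  · obtain ⟨hc1, hc2⟩ := hlen
    constructor
    · obtain ⟨cc, hcc⟩ := hc1
      exact ⟨e ∘ cc, fun i j hij => (hlt _ _).mp (hcc hij)⟩
    · rintro ⟨cc, hcc⟩
      exact hc2 ⟨e.symm ∘ cc, fun i j hij => (hlt' _ _).mp (hcc hij)⟩
  · rw [← hlev]
    unfold levCount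
    exact (Nat.card_congr (Equiv.subtypeEquiv e (fun a => honl a (h + 1)))).symm

/-- The canonical condition corresponding to `f n h k`. -/
def Ccond (n h k : ℕ) (c : Canon n) : Prop :=
  0 < n ∧ c.upc 0 = h ∧ Nat.card {a : Fin n // c.upc a.1 = h} = k

lemma model_pred_iff {h k : ℕ} (c : Canon n) :
    (SemiLen n h (model c) ∧ levCount n (model c) (h + 1) = k) ↔ Ccond n h k c := by
  rw [model_levCount]
  unfold Ccond
  rw [model_semiLen]
  tauto

lemma f_eq_card_canon (n h k : ℕ) :
    f n h k = Nat.card {c : Canon n // Ccond n h k c} := by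
  classical
  unfold f countPosets
  set pred : PartialOrder (Fin n) → Prop :=
    fun P => SemiLen n h P ∧ levCount n P (h + 1) = k with hpred
  set rel : {P : PartialOrder (Fin n) // pred P} → {P : PartialOrder (Fin n) // pred P} → Prop :=
    fun P Q => ∃ e : Fin n ≃ Fin n, ∀ a b : Fin n,
      (@LE.le _ P.1.toPreorder.toLE a b ↔ @LE.le _ Q.1.toPreorder.toLE (e a) (e b)) with hrel
  have hequiv : Equivalence rel := by
    constructor
    · intro P; exact ⟨Equiv.refl _, fun a b => Iff.rfl⟩
    · rintro P Q ⟨e, he⟩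
      refine ⟨e.symm, fun a b => ?_⟩
      have := he (e.symm a) (e.symm b)
      simp only [Equiv.apply_symm_apply] at this
      exact this.symm
    · rintro P Q R ⟨e, he⟩ ⟨e', he'⟩
      exact ⟨e.trans e', fun a b => (he a b).trans (he' (e a) (e b))⟩
  have hmodel : ∀ c : {c : Canon n // Ccond n h k c}, pred (model c.1) := by
    intro c
    exact (model_pred_iff c.1).mpr c.2
  set Φ : {c : Canon n // Ccond n h k c} → Quot rel :=
    fun c => Quot.mk rel ⟨model c.1, hmodel c⟩ with hΦ
  refine (Nat.card_eq_of_bijective Φ ⟨?_, ?_⟩).symm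
  · intro c c' hcc
    have := Quot.eqvGen_exact hcc
    rw [Equivalence.eqvGen_iff hequiv] at this
    obtain ⟨e, he⟩ := this
    exact Subtype.ext (canon_inj c.1 c'.1 e he)
  · intro q
    obtain ⟨⟨P, hP⟩⟩ := q.exists_rep
    rename_i hq
    obtain ⟨c, e, he⟩ := @exists_canon (Fin n) P _ n (Fintype.card_fin n) hP.1.1
    have hpredm : pred (model c) := pred_transfer P (model c) e he hP
    refine ⟨⟨c, (model_pred_iff c).mp hpredm⟩, ?_⟩
    rw [← hq, hΦ]
    exact (Quot.sound ⟨e, he⟩).symm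

end Transfer



section Restrict

open Finset

variable {n : ℕ}

lemma canon_lt (c : Canon n) {x : ℕ} (h : x < n) : x < c.1 ⟨x, h⟩ := (c.2.2 ⟨x, h⟩).1

lemma canon_le_n (c : Canon n) {x : ℕ} (h : x < n) : c.1 ⟨x, h⟩ ≤ n := (c.2.2 ⟨x, h⟩).2

lemma canon_mono (c : Canon n) {x y : ℕ} (hx : x < n) (hy : y < n) (hxy : x ≤ y) :
    c.1 ⟨x, hx⟩ ≤ c.1 ⟨y, hy⟩ := c.2.1 hxy

lemma card_upc_eq (c : Canon n) (L : ℕ) :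
    Nat.card {a : Fin n // c.upc a.1 = L}
      = ((univ : Finset (Fin n)).filter fun a => c.upc a.1 = L).card := by
  classical
  rw [Nat.card_eq_fintype_card, Fintype.card_subtype]

lemma upc_initial {h k : ℕ} (c : Canon n) (htop : c.upc 0 = h)
    (hcard : Nat.card {a : Fin n // c.upc a.1 = h} = k) (a : Fin n) :
    c.upc a.1 = h ↔ a.1 < k := by
  classical
  rw [card_upc_eq] at hcard
  set T := (univ : Finset (Fin n)).filter fun a => c.upc a.1 = h with hT
  have hdc : ∀ ⦃j j' : Fin n⦄, j ∈ T → j' ≤ j → j' ∈ T := by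
    intro j j' hj hj'
    simp only [hT, mem_filter, mem_univ, true_and] at hj ⊢
    have h1 : c.upc j.1 ≤ c.upc j'.1 := c.upc_anti hj'
    have h2 : c.upc j'.1 ≤ c.upc 0 := c.upc_anti (Nat.zero_le _)
    omega
  have := mem_downClosed_iff T hdc a
  rw [hcard] at this
  rw [← this]
  simp [hT]

lemma upc_last (c : Canon n) (hn : 0 < n) : c.upc (n - 1) = 0 := by
  have hn1 : n - 1 < n := by omega
  have h1 := canon_lt c hn1
  have h2 := canon_le_n c hn1
  rw [c.upc_eq' hn1, if_neg (by omega)]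

/-- Restriction of a canonical semiorder, removing the first `k` elements. -/
def Canon.restrict (c : Canon n) (k : ℕ) (hk : k ≤ n) : Canon (n - k) :=
  ⟨fun j => c.1 ⟨j.1 + k, by omega⟩ - k,
   by
    intro i j hij
    show c.1 ⟨i.1 + k, by omega⟩ - k ≤ c.1 ⟨j.1 + k, by omega⟩ - k
    exact Nat.sub_le_sub_right
      (canon_mono c (by omega) (by omega) (Nat.add_le_add_right hij k)) k,
   by
    intro j
    have hjk : j.1 + k < n := by omega
    have h1 := canon_lt c hjk
    have h2 := canon_le_n c hjk
    constructor
    · show j.1 < c.1 ⟨j.1 + k, by omega⟩ - k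
      have h3 : c.1 ⟨j.1 + k, by omega⟩ = c.1 ⟨j.1 + k, hjk⟩ := rfl
      omega
    · show c.1 ⟨j.1 + k, by omega⟩ - k ≤ n - k
      have h3 : c.1 ⟨j.1 + k, by omega⟩ = c.1 ⟨j.1 + k, hjk⟩ := rfl
      omega⟩

lemma restrict_val (c : Canon n) (k : ℕ) (hk : k ≤ n) (j : Fin (n - k)) (hjk : j.1 + k < n) :
    (c.restrict k hk).1 j = c.1 ⟨j.1 + k, hjk⟩ - k := rfl

lemma upc_restrict (c : Canon n) (k : ℕ) (hk : k ≤ n) (j : ℕ) :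
    (c.restrict k hk).upc j = c.upc (j + k) := by
  rcases Nat.lt_or_ge j (n - k) with hj | hj
  · have hjk : j + k < n := by omega
    rw [(c.restrict k hk).upc_eq' hj, c.upc_eq' hjk]
    have hval : (c.restrict k hk).1 ⟨j, hj⟩ = c.1 ⟨j + k, hjk⟩ - k :=
      restrict_val c k hk ⟨j, hj⟩ hjk
    have h1 := canon_lt c hjk
    have h2 := canon_le_n c hjk
    rw [hval]
    by_cases hlt : c.1 ⟨j + k, hjk⟩ < n
    · rw [if_pos (by omega), if_pos hlt]
      have := upc_restrict c k hk (c.1 ⟨j + k, hjk⟩ - k)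
      rw [this]
      congr 2
      omega
    · rw [if_neg (by omega), if_neg hlt]
  · rw [(c.restrict k hk).upc_of_ge hj, c.upc_of_ge (by omega)]
termination_by n - k - j
decreasing_by omega

end Restrict


section MonoCount

open Finset

lemma sm_gap {k N : ℕ} (t : Fin k → Fin N) (ht : StrictMono t) :
    ∀ (d : ℕ) (i j : Fin k), i.1 + d = j.1 → (t i).1 + d ≤ (t j).1 := by
  intro d
  induction d with
  | zero =>
    intro i j hij
    have : i = j := Fin.ext (by omega)
    subst this
    omega
  | succ d ih =>
    intro i j hij
    have hmid : i.1 + d < k := by have := j.2; omega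
    have h1 := ih i ⟨i.1 + d, hmid⟩ rfl
    have h2 : (⟨i.1 + d, hmid⟩ : Fin k) < j := by
      rw [Fin.lt_def]; show i.1 + d < j.1; omega
    have h3 := Fin.lt_def.mp (ht h2)
    omega

lemma sm_le {k N : ℕ} (t : Fin k → Fin N) (ht : StrictMono t) (i : Fin k) :
    i.1 ≤ (t i).1 := by
  have h0 : (0 : ℕ) < k := by have := i.2; omega
  have := sm_gap t ht i.1 ⟨0, h0⟩ i (by show 0 + i.1 = i.1; omega)
  omega

lemma sm_ub {k N : ℕ} (t : Fin k → Fin N) (ht : StrictMono t) (i : Fin k) :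
    (t i).1 + (k - 1 - i.1) < N := by
  have hk : k - 1 < k := by have := i.2; omega
  have h1 := sm_gap t ht (k - 1 - i.1) i ⟨k - 1, hk⟩ (by show i.1 + (k-1-i.1) = k-1; have := i.2; omega)
  have h2 := (t ⟨k - 1, hk⟩).2
  omega

noncomputable def equivMono (k m : ℕ) :
    {s : Fin k → Fin m // Monotone s} ≃ {t : Fin k → Fin (m + k - 1) // StrictMono t} where
  toFun s := ⟨fun i => ⟨(s.1 i).1 + i.1, by have := (s.1 i).2; have := i.2; omega⟩, by
    intro a b hab
    rw [Fin.lt_def]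
    show (s.1 a).1 + a.1 < (s.1 b).1 + b.1
    have h1 : s.1 a ≤ s.1 b := s.2 (le_of_lt hab)
    have h2 : (s.1 a).1 ≤ (s.1 b).1 := h1
    have h3 : a.1 < b.1 := hab
    omega⟩
  invFun t := ⟨fun i => ⟨(t.1 i).1 - i.1, by
      have h1 := sm_ub t.1 t.2 i
      have h2 := i.2
      have h0 : (0:ℕ) < k := lt_of_le_of_lt (Nat.zero_le _) i.2
      have h4 : (t.1 ⟨0, h0⟩).1 + (k - 1 - 0) < m + k - 1 := sm_ub t.1 t.2 ⟨0, h0⟩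
      omega⟩, by
    intro a b hab
    show (t.1 a).1 - a.1 ≤ (t.1 b).1 - b.1
    have h1 := sm_gap t.1 t.2 (b.1 - a.1) a b (by have : a.1 ≤ b.1 := hab; omega)
    omega⟩
  left_inv s := by
    apply Subtype.ext; funext i; apply Fin.ext
    show (s.1 i).1 + i.1 - i.1 = (s.1 i).1
    omega
  right_inv t := by
    apply Subtype.ext; funext i; apply Fin.ext
    show (t.1 i).1 - i.1 + i.1 = (t.1 i).1
    have := sm_le t.1 t.2 i
    omega

noncomputable def equivStrict (k N : ℕ) :
    {t : Fin k → Fin N // StrictMono t} ≃ {A : Finset (Fin N) // A.card = k} where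
  toFun t := ⟨Finset.image t.1 univ, by
    rw [Finset.card_image_of_injective _ t.2.injective, card_univ, Fintype.card_fin]⟩
  invFun A := ⟨fun i => A.1.orderEmbOfFin A.2 i, (A.1.orderEmbOfFin A.2).strictMono⟩
  left_inv t := by
    apply Subtype.ext
    exact (Finset.orderEmbOfFin_unique _ (fun x => Finset.mem_image_of_mem _ (mem_univ x)) t.2).symm
  right_inv A := by
    apply Subtype.ext
    apply Finset.coe_injective
    rw [Finset.coe_image, Finset.coe_univ, Set.image_univ]
    exact Finset.range_orderEmbOfFin A.1 A.2

lemma card_mono_maps (k m : ℕ) :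
    Nat.card {s : Fin k → Fin m // Monotone s} = (m + k - 1).choose k := by
  classical
  rw [Nat.card_congr (equivMono k m), Nat.card_congr (equivStrict k (m + k - 1)),
    Nat.card_eq_fintype_card, Fintype.card_finset_len, Fintype.card_fin]

end MonoCount



section FiberEquiv

open Finset

variable {n h k : ℕ}

/-- Number of elements on the last level of the restriction. -/
noncomputable def mOf (h : ℕ) {n : ℕ} (k : ℕ) (hk : k ≤ n) (c : Canon n) : ℕ :=
  Nat.card {j : Fin (n - k) // (c.restrict k hk).upc j.1 = h - 1}

lemma upc_initialN {h k : ℕ} (c : Canon n) (htop : c.upc 0 = h)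
    (hcard : Nat.card {a : Fin n // c.upc a.1 = h} = k) (i : ℕ) (hi : i < n) :
    c.upc i = h ↔ i < k := upc_initial c htop hcard ⟨i, hi⟩

lemma ccond_klt (hh : 1 ≤ h) {c : Canon n} (hc : Ccond n h k c) : k < n := by
  obtain ⟨hn, htop, hcard⟩ := hc
  have hlast := upc_last c hn
  have h2 := upc_initialN c htop hcard (n - 1) (by omega)
  have h3 := upc_initialN c htop hcard 0 hn
  omega

lemma ccond_upck (hh : 1 ≤ h) (hk1 : 1 ≤ k) {c : Canon n} (hc : Ccond n h k c) :
    c.upc k = h - 1 := by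
  have hkn := ccond_klt hh hc
  obtain ⟨hn, htop, hcard⟩ := hc
  have hk1n : k - 1 < n := by omega
  have e1 : c.upc (k - 1) = h := (upc_initialN c htop hcard (k - 1) hk1n).mpr (by omega)
  rw [c.upc_eq' hk1n] at e1
  have hv1 := canon_lt c hk1n
  by_cases hvn : c.1 ⟨k - 1, hk1n⟩ < n
  · rw [if_pos hvn] at e1
    have e2 : c.upc (c.1 ⟨k - 1, hk1n⟩) = h - 1 := by omega
    have e3 : c.upc k ≤ c.upc (k - 1) := c.upc_anti (by omega)
    have e4 : c.upc (c.1 ⟨k - 1, hk1n⟩) ≤ c.upc k := c.upc_anti (by omega)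
    have e5 : c.upc (k - 1) = h := by
      rw [c.upc_eq' hk1n, if_pos hvn]; omega
    have e6 : c.upc k = h ↔ k < k := upc_initialN c htop hcard k hkn
    omega
  · rw [if_neg hvn] at e1
    omega

lemma card_upc_le (c : Canon n) (L : ℕ) : Nat.card {a : Fin n // c.upc a.1 = L} ≤ n := by
  rw [card_upc_eq]
  calc ((univ : Finset (Fin n)).filter fun a => c.upc a.1 = L).card
      ≤ (univ : Finset (Fin n)).card := Finset.card_filter_le _ _
    _ = n := by rw [card_univ, Fintype.card_fin]

lemma ccond_restrict (hh : 1 ≤ h) (hk1 : 1 ≤ k) {c : Canon n} (hc : Ccond n h k c)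
    (hk : k ≤ n) : Ccond (n - k) (h - 1) (mOf h k hk c) (c.restrict k hk) := by
  have hkn := ccond_klt hh hc
  refine ⟨by omega, ?_, rfl⟩
  rw [upc_restrict c k hk 0]
  simpa using ccond_upck hh hk1 hc

lemma ccond_mOf_mem (hh : 1 ≤ h) (hk1 : 1 ≤ k) {c : Canon n} (hc : Ccond n h k c)
    (hk : k ≤ n) : 1 ≤ mOf h k hk c ∧ mOf h k hk c ≤ n - k := by
  classical
  have hkn := ccond_klt hh hc
  constructor
  · unfold mOf
    rw [card_upc_eq]
    refine Nat.one_le_iff_ne_zero.mpr (Finset.card_ne_zero_of_mem (a := ⟨0, by omega⟩) ?_)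
    simp only [mem_filter, mem_univ, true_and]
    show (c.restrict k hk).upc 0 = h - 1
    rw [upc_restrict c k hk 0]
    simpa using ccond_upck hh hk1 hc
  · exact card_upc_le _ _

lemma ccond_val_range (hh : 1 ≤ h) (hk1 : 1 ≤ k) {c : Canon n} (hc : Ccond n h k c)
    (hk : k ≤ n) (i : ℕ) (hik : i < k) (hin : i < n) :
    k ≤ c.1 ⟨i, hin⟩ ∧ c.1 ⟨i, hin⟩ < k + mOf h k hk c := by
  have hkn := ccond_klt hh hc
  have hres := ccond_restrict hh hk1 hc hk
  obtain ⟨hn, htop, hcard⟩ := hc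
  have e1 : c.upc i = h := (upc_initialN c htop hcard i hin).mpr hik
  rw [c.upc_eq' hin] at e1
  have hv1 := canon_lt c hin
  have hv2 := canon_le_n c hin
  by_cases hvn : c.1 ⟨i, hin⟩ < n
  · rw [if_pos hvn] at e1
    have e2 : c.upc (c.1 ⟨i, hin⟩) = h - 1 := by omega
    have hge : k ≤ c.1 ⟨i, hin⟩ := by
      by_contra hlt
      push_neg at hlt
      have e3 := upc_initialN c htop hcard (c.1 ⟨i, hin⟩) hvn
      omega
    refine ⟨hge, ?_⟩
    have hjlt : c.1 ⟨i, hin⟩ - k < n - k := by omega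
    have e4 : (c.restrict k hk).upc (c.1 ⟨i, hin⟩ - k) = h - 1 := by
      rw [upc_restrict c k hk]
      have : c.1 ⟨i, hin⟩ - k + k = c.1 ⟨i, hin⟩ := by omega
      rw [this]
      exact e2
    have e5 := upc_initialN (c.restrict k hk) hres.2.1 hres.2.2 (c.1 ⟨i, hin⟩ - k) hjlt
    omega
  · rw [if_neg hvn] at e1
    omega

end FiberEquiv


section Glue

open Finset

variable {n h k m : ℕ}

lemma ccond_pos_m {N L M : ℕ} {c : Canon N} (hc : Ccond N L M c) : 0 < M := by
  obtain ⟨hn, ht, hcd⟩ := hc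
  have := upc_initialN c ht hcd 0 hn
  omega

lemma ccond_m_le {N L M : ℕ} {c : Canon N} (hc : Ccond N L M c) : M ≤ N := by
  rw [← hc.2.2]
  exact card_upc_le _ _

lemma ccond_r0 {N L M : ℕ} {c : Canon N} (hc : Ccond N L M c) (hn : 0 < N) :
    M ≤ c.1 ⟨0, hn⟩ := by
  have hMN := ccond_m_le hc
  obtain ⟨hn', ht, hcd⟩ := hc
  have ht' := ht
  rw [c.upc_eq' hn] at ht'
  by_cases hv : c.1 ⟨0, hn⟩ < N
  · rw [if_pos hv] at ht'
    have h2 := upc_initialN c ht hcd (c.1 ⟨0, hn⟩) hv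
    omega
  · have := canon_le_n c hn
    omega

/-- Glue `k` new bottom elements onto a canonical semiorder. -/
def glue (hk : k ≤ n) (s : {s : Fin k → Fin m // Monotone s})
    (c' : {c' : Canon (n - k) // Ccond (n - k) (h - 1) m c'}) : Canon n := by
  have hnk : 0 < n - k := c'.2.1
  have hm1 : 0 < m := ccond_pos_m c'.2
  have hmnk : m ≤ n - k := ccond_m_le c'.2
  have hr0 : m ≤ c'.1.1 ⟨0, hnk⟩ := ccond_r0 c'.2 hnk
  refine ⟨fun i => if hik : i.1 < k then (s.1 ⟨i.1, hik⟩).1 + k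
    else c'.1.1 ⟨i.1 - k, by have := i.2; omega⟩ + k, ?_, ?_⟩
  · intro i j hij
    have hij' : i.1 ≤ j.1 := hij
    dsimp only
    by_cases hik : i.1 < k <;> by_cases hjk : j.1 < k
    · rw [dif_pos hik, dif_pos hjk]
      have hmono : s.1 ⟨i.1, hik⟩ ≤ s.1 ⟨j.1, hjk⟩ := s.2 (by show i.1 ≤ j.1; omega)
      have : (s.1 ⟨i.1, hik⟩).1 ≤ (s.1 ⟨j.1, hjk⟩).1 := hmono
      omega
    · rw [dif_pos hik, dif_neg hjk]
      have h1 : (s.1 ⟨i.1, hik⟩).1 < m := (s.1 ⟨i.1, hik⟩).2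
      have h2 : c'.1.1 ⟨0, hnk⟩ ≤ c'.1.1 ⟨j.1 - k, by have := j.2; omega⟩ :=
        canon_mono c'.1 hnk (by have := j.2; omega) (by omega)
      omega
    · omega
    · rw [dif_neg hik, dif_neg hjk]
      have h2 : c'.1.1 ⟨i.1 - k, by have := i.2; omega⟩ ≤ c'.1.1 ⟨j.1 - k, by have := j.2; omega⟩ :=
        canon_mono c'.1 (by have := i.2; omega) (by have := j.2; omega) (by omega)
      omega
  · intro i
    dsimp only
    by_cases hik : i.1 < k
    · rw [dif_pos hik]
      have h1 : (s.1 ⟨i.1, hik⟩).1 < m := (s.1 ⟨i.1, hik⟩).2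
      constructor <;> omega
    · rw [dif_neg hik]
      have hjk : i.1 - k < n - k := by have := i.2; omega
      have h1 := canon_lt c'.1 hjk
      have h2 := canon_le_n c'.1 hjk
      constructor <;> omega

lemma glue_restrict (hk : k ≤ n) (s : {s : Fin k → Fin m // Monotone s})
    (c' : {c' : Canon (n - k) // Ccond (n - k) (h - 1) m c'}) :
    (glue (h := h) hk s c').restrict k hk = c'.1 := by
  apply Subtype.ext
  funext j
  have hjk : j.1 + k < n := by have := j.2; omega
  rw [restrict_val _ k hk j hjk]
  have hne : ¬ (j.1 + k < k) := by omega
  show (if hik : j.1 + k < k then _ else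
    c'.1.1 ⟨j.1 + k - k, by omega⟩ + k) - k = c'.1.1 j
  rw [dif_neg hne]
  have : (⟨j.1 + k - k, by omega⟩ : Fin (n - k)) = j := Fin.ext (by show j.1 + k - k = j.1; omega)
  rw [this]
  omega

lemma glue_upc_ge (hk : k ≤ n) (s : {s : Fin k → Fin m // Monotone s})
    (c' : {c' : Canon (n - k) // Ccond (n - k) (h - 1) m c'}) (j : ℕ) :
    (glue (h := h) hk s c').upc (j + k) = c'.1.upc j := by
  rw [← upc_restrict (glue (h := h) hk s c') k hk j, glue_restrict]

lemma glue_upc_lt (hh : 1 ≤ h) (hk : k ≤ n) (s : {s : Fin k → Fin m // Monotone s})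
    (c' : {c' : Canon (n - k) // Ccond (n - k) (h - 1) m c'}) (i : ℕ) (hik : i < k) :
    (glue (h := h) hk s c').upc i = h := by
  have hnk : 0 < n - k := c'.2.1
  have hmnk : m ≤ n - k := ccond_m_le c'.2
  have hin : i < n := by omega
  set g := glue (h := h) hk s c' with hg
  rw [g.upc_eq' hin]
  have hval : g.1 ⟨i, hin⟩ = (s.1 ⟨i, hik⟩).1 + k := by
    show (if h' : i < k then (s.1 ⟨i, h'⟩).1 + k else _) = _
    rw [dif_pos hik]
  have hsm : (s.1 ⟨i, hik⟩).1 < m := (s.1 ⟨i, hik⟩).2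
  rw [hval, if_pos (by omega)]
  have e1 : g.upc ((s.1 ⟨i, hik⟩).1 + k) = c'.1.upc (s.1 ⟨i, hik⟩).1 := glue_upc_ge hk s c' _
  have e2 := upc_initialN c'.1 c'.2.2.1 c'.2.2.2 (s.1 ⟨i, hik⟩).1 (by omega)
  omega

lemma glue_ccond (hh : 1 ≤ h) (hk1 : 1 ≤ k) (hk : k ≤ n)
    (s : {s : Fin k → Fin m // Monotone s})
    (c' : {c' : Canon (n - k) // Ccond (n - k) (h - 1) m c'}) :
    Ccond n h k (glue (h := h) hk s c') := by
  classical
  have hnk : 0 < n - k := c'.2.1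
  set g := glue (h := h) hk s c' with hg
  have hchar : ∀ a : Fin n, g.upc a.1 = h ↔ a.1 < k := by
    intro a
    by_cases hak : a.1 < k
    · simp only [hak, iff_true]
      exact glue_upc_lt hh hk s c' a.1 hak
    · simp only [hak, iff_false]
      have ha : a.1 = (a.1 - k) + k := by omega
      rw [ha, glue_upc_ge hk s c']
      have h1 : c'.1.upc (a.1 - k) ≤ c'.1.upc 0 := c'.1.upc_anti (Nat.zero_le _)
      rw [c'.2.2.1] at h1
      omega
  refine ⟨by omega, ?_, ?_⟩
  · exact glue_upc_lt hh hk s c' 0 (by omega)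
  · rw [card_upc_eq]
    have : ((univ : Finset (Fin n)).filter fun a => g.upc a.1 = h)
        = (univ : Finset (Fin n)).filter fun a => a.1 < k := by
      ext a
      simp only [mem_filter, mem_univ, true_and]
      exact hchar a
    rw [this, card_filter_lt']
    omega

lemma glue_mOf (hh : 1 ≤ h) (hk1 : 1 ≤ k) (hk : k ≤ n)
    (s : {s : Fin k → Fin m // Monotone s})
    (c' : {c' : Canon (n - k) // Ccond (n - k) (h - 1) m c'}) :
    mOf h k hk (glue (h := h) hk s c') = m := by
  unfold mOf
  rw [glue_restrict]
  exact c'.2.2.2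

end Glue


section Assembly

open Finset

variable {n h k : ℕ}

noncomputable def fiberEquiv (hh : 1 ≤ h) (hk1 : 1 ≤ k) (hk : k ≤ n) (m : ℕ) :
    {x : {c : Canon n // Ccond n h k c} // mOf h k hk x.1 = m} ≃
      ({s : Fin k → Fin m // Monotone s} ×
        {c' : Canon (n - k) // Ccond (n - k) (h - 1) m c'}) where
  toFun x :=
    ⟨⟨fun i => ⟨x.1.1.1 ⟨i.1, lt_of_lt_of_le i.2 hk⟩ - k, by
        have hr := ccond_val_range hh hk1 x.1.2 hk i.1 i.2 (lt_of_lt_of_le i.2 hk)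
        have hm := x.2
        omega⟩, by
      intro i j hij
      show x.1.1.1 ⟨i.1, _⟩ - k ≤ x.1.1.1 ⟨j.1, _⟩ - k
      have := canon_mono x.1.1 (lt_of_lt_of_le i.2 hk) (lt_of_lt_of_le j.2 hk)
        (show i.1 ≤ j.1 from hij)
      omega⟩,
    ⟨x.1.1.restrict k hk, by
      have := ccond_restrict hh hk1 x.1.2 hk
      rwa [x.2] at this⟩⟩
  invFun p := ⟨⟨glue hk p.1 p.2, glue_ccond hh hk1 hk p.1 p.2⟩, glue_mOf hh hk1 hk p.1 p.2⟩
  left_inv x := by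
    refine Subtype.ext (Subtype.ext (Subtype.ext (funext fun i => ?_)))
    show (glue hk _ _).1 i = x.1.1.1 i
    by_cases hik : i.1 < k
    · have hin : i.1 < n := i.2
      have hr := ccond_val_range hh hk1 x.1.2 hk i.1 hik hin
      show (if h' : i.1 < k then _ else _) = _
      rw [dif_pos hik]
      show x.1.1.1 ⟨i.1, _⟩ - k + k = x.1.1.1 i
      have heta : (⟨i.1, hin⟩ : Fin n) = i := Fin.ext rfl
      rw [heta] at hr ⊢
      omega
    · show (if h' : i.1 < k then _ else _) = _
      rw [dif_neg hik]
      have hjk : i.1 - k < n - k := by have := i.2; omega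
      have hjk2 : (i.1 - k) + k < n := by have := i.2; omega
      show (x.1.1.restrict k hk).1 ⟨i.1 - k, hjk⟩ + k = x.1.1.1 i
      rw [restrict_val x.1.1 k hk ⟨i.1 - k, hjk⟩ hjk2]
      have heta : (⟨i.1 - k + k, hjk2⟩ : Fin n) = i := Fin.ext (by show i.1 - k + k = i.1; omega)
      rw [heta]
      have h1 : i.1 < x.1.1.1 i := canon_lt x.1.1 i.2
      omega
  right_inv p := by
    refine Prod.ext ?_ ?_
    · apply Subtype.ext
      funext i
      apply Fin.ext
      show (glue hk p.1 p.2).1 ⟨i.1, _⟩ - k = (p.1.1 i).1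
      show (if h' : i.1 < k then ((p.1.1 ⟨i.1, h'⟩).1 + k) else _) - k = (p.1.1 i).1
      rw [dif_pos i.2]
      have heta : (⟨i.1, i.2⟩ : Fin k) = i := Fin.ext rfl
      rw [heta]
      omega
    · apply Subtype.ext
      show (glue hk p.1 p.2).restrict k hk = p.2.1
      exact glue_restrict hk p.1 p.2

lemma card_fiber (hh : 1 ≤ h) (hk1 : 1 ≤ k) (hk : k ≤ n) (m : ℕ) :
    Nat.card {x : {c : Canon n // Ccond n h k c} // mOf h k hk x.1 = m}
      = (m + k - 1).choose k * Nat.card {c' : Canon (n - k) // Ccond (n - k) (h - 1) m c'} := by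
  rw [Nat.card_congr (fiberEquiv hh hk1 hk m), Nat.card_prod, card_mono_maps]

theorem card_ccond_sum (hh : 1 ≤ h) (hk1 : 1 ≤ k) (hkn : k ≤ n) :
    Nat.card {c : Canon n // Ccond n h k c}
      = ∑ m ∈ Finset.Icc 1 (n - k), (m + k - 1).choose (m - 1) *
          Nat.card {c' : Canon (n - k) // Ccond (n - k) (h - 1) m c'} := by
  classical
  set F : {c : Canon n // Ccond n h k c} → ↥(Finset.Icc 1 (n - k)) := fun x => ⟨mOf h k hkn x.1, by
    rw [Finset.mem_Icc]
    exact ccond_mOf_mem hh hk1 x.2 hkn⟩ with hF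
  have e1 : Nat.card {c : Canon n // Ccond n h k c} = Nat.card (Σ b : ↥(Finset.Icc 1 (n - k)), {x // F x = b}) :=
    (Nat.card_congr (Equiv.sigmaFiberEquiv F)).symm
  rw [e1, Nat.card_eq_fintype_card, Fintype.card_sigma]
  rw [← Finset.sum_coe_sort (Finset.Icc 1 (n - k)) (fun m => (m + k - 1).choose (m - 1) *
      Nat.card {c' : Canon (n - k) // Ccond (n - k) (h - 1) m c'})]
  refine Finset.sum_congr rfl fun b _ => ?_
  have hb : 1 ≤ (b : ℕ) ∧ (b : ℕ) ≤ n - k := Finset.mem_Icc.mp b.2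
  have e2 : Fintype.card {x // F x = b}
      = Nat.card {x : {c : Canon n // Ccond n h k c} // mOf h k hkn x.1 = (b : ℕ)} := by
    rw [Nat.card_eq_fintype_card]
    refine Fintype.card_congr (Equiv.subtypeEquivRight fun x => ?_)
    rw [hF]
    constructor
    · intro hx; exact congrArg Subtype.val hx
    · intro hx; exact Subtype.ext hx
  rw [e2, card_fiber hh hk1 hkn (b : ℕ)]
  have e3 : ((b : ℕ) + k - 1).choose k = ((b : ℕ) + k - 1).choose ((b : ℕ) - 1) := by
    have h1 : k ≤ (b : ℕ) + k - 1 := by omega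
    have := Nat.choose_symm h1
    have h2 : (b : ℕ) + k - 1 - k = (b : ℕ) - 1 := by omega
    rw [h2] at this
    rw [← this]
  rw [e3]

end Assembly

theorem statement3 (n h k : ℕ) (hh : 1 ≤ h) (hk1 : 1 ≤ k) (hkn : k ≤ n) :
    f n h k = ∑ m ∈ Finset.Icc 1 (n - k), (m + k - 1).choose (m - 1) * f (n - k) (h - 1) m := by
  rw [f_eq_card_canon n h k, card_ccond_sum hh hk1 hkn]
  exact Finset.sum_congr rfl fun m _ => by rw [f_eq_card_canon (n - k) (h - 1) m]

end Paper
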